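/- The element w = Σ_ρ W^ρ ⊗ ∇_ρ in E^{⊗4}, where E has basis ∇_0,…,∇_s and W^ρ = Σ W^{ρλμν} ∇_λ⊗∇_μ⊗∇_ν with W^{ρλμν} = g^{ρλ}g^{μν} + g^{ρν}g^{λμ} − 2g^{ρμ}g^{λν}, satisfies Σ_ρ W^ρ ⊗ ∇_ρ = Σ_ρ ∇_ρ ⊗ W^ρ, i.e. w lies in (R⊗E) ∩ (E⊗R) where R = span{W^ρ}. -/
import Mathlib

open Finset TensorProduct

/-- with `e_i` the canonical basis of `E = K^{s+1}` and
`W^{ρλμν} = g^{ρλ}g^{μν} + g^{ρν}g^{λμ} − 2g^{ρμ}g^{λν}`, the element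
`w = Σ_ρ W^ρ ⊗ ∇_ρ` of `E^{⊗4}` equals `Σ_ρ ∇_ρ ⊗ W^ρ`. -/
theorem yang_mills_w_cyclic {K : Type*} [Field K] {s : ℕ}
    (g : Fin (s + 1) → Fin (s + 1) → K)
    (hsym : ∀ α β, g α β = g β α)
    (W : Fin (s + 1) → Fin (s + 1) → Fin (s + 1) → Fin (s + 1) → K)
    (hW : ∀ ρ lam μ ν, W ρ lam μ ν = g ρ lam * g μ ν + g ρ ν * g lam μ - 2 * g ρ μ * g lam ν)
    (e : Fin (s + 1) → (Fin (s + 1) → K))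
    (he : ∀ i, e i = Pi.single i 1) :
    (∑ ρ, ∑ lam, ∑ μ, ∑ ν, W ρ lam μ ν •
        (e lam ⊗ₜ[K] (e μ ⊗ₜ[K] (e ν ⊗ₜ[K] e ρ))) :
      (Fin (s + 1) → K) ⊗[K] ((Fin (s + 1) → K) ⊗[K] ((Fin (s + 1) → K) ⊗[K] (Fin (s + 1) → K)))) =
    ∑ ρ, ∑ lam, ∑ μ, ∑ ν, W ρ lam μ ν •
        (e ρ ⊗ₜ[K] (e lam ⊗ₜ[K] (e μ ⊗ₜ[K] e ν))) := by
  have key : ∀ ρ lam μ ν, W ρ lam μ ν = W lam μ ν ρ := by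
    intro ρ lam μ ν
    simp only [hW]
    rw [hsym ρ lam, hsym ρ ν, hsym ρ μ]
    ring
  rw [Finset.sum_comm]
  refine Finset.sum_congr rfl fun lam _ => ?_
  rw [Finset.sum_comm]
  refine Finset.sum_congr rfl fun μ _ => ?_
  rw [Finset.sum_comm]
  refine Finset.sum_congr rfl fun ν _ => ?_
  refine Finset.sum_congr rfl fun ρ _ => ?_
  rw [key]
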